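/- Suppose the no-conflict invariant holds for u: for all vertices p and q with c p q, q does not strictly reach p under u. Then the no-conflict invariant holds for the augmented relation u' (for all p, q with c p q, q does not strictly reach p under u') if and only if there do not exist vertices k and m such that i reaches k under u, c k m holds, and m reaches j under u. -/

import Mathlib

lemma aux_last {V : Type*} (u : V → V → Prop) (j i : V) {x y : V}
    (h : Relation.ReflTransGen (fun a b => u a b ∨ (a = j ∧ b = i)) x y) :
    Relation.ReflTransGen u x y ∨ Relation.ReflTransGen u i y := by
  induction h with
  | refl => exact Or.inl Relation.ReflTransGen.refl
  | tail _ hbc ih =>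
    rcases hbc with hu | ⟨_, rfl⟩
    · rcases ih with h1 | h1
      · exact Or.inl (h1.tail hu)
      · exact Or.inr (h1.tail hu)
    · exact Or.inr Relation.ReflTransGen.refl

lemma aux_first {V : Type*} (u : V → V → Prop) (j i : V) {x y : V}
    (h : Relation.TransGen (fun a b => u a b ∨ (a = j ∧ b = i)) x y) :
    Relation.TransGen u x y ∨ (Relation.ReflTransGen u x j ∧
      Relation.ReflTransGen (fun a b => u a b ∨ (a = j ∧ b = i)) i y) := by
  induction h using Relation.TransGen.head_induction_on with
  | single hab =>
    rcases hab with hu | ⟨rfl, rfl⟩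
    · exact Or.inl (Relation.TransGen.single hu)
    · exact Or.inr ⟨Relation.ReflTransGen.refl, Relation.ReflTransGen.refl⟩
  | head hab hbc ih =>
    rcases hab with hu | ⟨rfl, rfl⟩
    · rcases ih with h1 | ⟨h1, h2⟩
      · exact Or.inl (h1.head hu)
      · exact Or.inr ⟨h1.head hu, h2⟩
    · exact Or.inr ⟨Relation.ReflTransGen.refl, hbc.to_reflTransGen⟩

/-- Necessity and sufficiency of the emptiness check of line 3 of
Algorithm 2: given the no-conflict invariant for `u`, the invariant holds
for the relation augmented with the edge `(j, i)` iff there are no `k`, `m`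
with `i` reaching `k` under `u`, `c k m`, and `m` reaching `j` under `u`. -/
theorem edge_addition_no_conflict_iff {V : Type*}
    (u c : V → V → Prop) (j i : V)
    (hsymm : ∀ x y : V, c x y → c y x)
    (hinv : ∀ p q : V, c p q → ¬ Relation.TransGen u q p) :
    (∀ p q : V, c p q →
        ¬ Relation.TransGen (fun x y => u x y ∨ (x = j ∧ y = i)) q p) ↔
      ¬ ∃ k m : V, Relation.ReflTransGen u i k ∧ c k m ∧
          Relation.ReflTransGen u m j := by
  constructor
  · rintro hinv' ⟨k, m, hik, hckm, hmj⟩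
    apply hinv' k m hckm
    have h1 : Relation.ReflTransGen (fun a b => u a b ∨ (a = j ∧ b = i)) m j :=
      Relation.ReflTransGen.mono (fun a b h => Or.inl h) _ _ hmj
    have h2 : Relation.ReflTransGen (fun a b => u a b ∨ (a = j ∧ b = i)) i k :=
      Relation.ReflTransGen.mono (fun a b h => Or.inl h) _ _ hik
    exact (Relation.TransGen.trans_right h1 (Relation.TransGen.single (Or.inr ⟨rfl, rfl⟩))).trans_left h2
  · rintro hne p q hcpq hT
    rcases aux_first u j i hT with hT' | ⟨hqj, hip⟩
    · exact hinv p q hcpq hT'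
    · have hip' : Relation.ReflTransGen u i p := by
        rcases aux_last u j i hip with h | h <;> exact h
      exact hne ⟨p, q, hip', hcpq, hqj⟩
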